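/- arXiv:2005.11051 — 4 statements merged into one kernel-verified Lean document; each statement's English description precedes it below -/
import Mathlib

section
/- Let (G,p,q) be a generic linearly constrained framework in ℝ^d, where G = (V,E,L) is a looped simple graph. Suppose v ∈ V is a vertex and ℓ ∈ L is a loop incident to v such that rank R(G,p,q) = rank R(G − ℓ, p, q). Then ṗ(v) = 0 for every infinitesimal motion ṗ of (G,p,q). -/
set_option maxHeartbeats 1000000
set_option synthInstance.maxHeartbeats 400000


/-- The row of the bar-joint rigidity matrix in `ℝ^d` corresponding to an (unordered) edge:
for the edge `{u,v}` it has `p u - p v` in the columns of `u`, `p v - p u` in the columns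
of `v`, and zeros elsewhere. -/
noncomputable def edgeRow {V : Type*} [DecidableEq V] (d : ℕ) (p : V → Fin d → ℝ) :
    Sym2 V → (V × Fin d → ℝ) :=
  Sym2.lift ⟨fun u v x =>
      (if x.1 = u then p u x.2 - p v x.2 else 0) +
      (if x.1 = v then p v x.2 - p u x.2 else 0),
    fun u v => funext fun x => add_comm _ _⟩

/-- A looped simple graph: a simple graph together with a family of loops, each loop
incident to a single vertex (a vertex may carry several loops). `Λ` indexes the loops. -/
structure LoopedGraph (V : Type*) (Λ : Type*) where
  graph : SimpleGraph V
  loopAt : Λ → V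

/-- The rigidity matrix of a linearly constrained framework `(G,p,q)` in `ℝ^d`. -/
noncomputable def lcRigidityMatrix {V Λ : Type*} [DecidableEq V] (d : ℕ)
    (G : LoopedGraph V Λ) (p : V → Fin d → ℝ) (q : Λ → Fin d → ℝ) :
    Matrix (↥G.graph.edgeSet ⊕ Λ) (V × Fin d) ℝ :=
  Matrix.of fun r x =>
    match r with
    | Sum.inl e => edgeRow d p e.1 x
    | Sum.inr j => if x.1 = G.loopAt j then q j x.2 else 0

/-- `(p,q)` is generic if the coordinates of `p` and `q` together are algebraically
independent over `ℚ`. -/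
def GenericPQ {V Λ : Type*} (d : ℕ) (p : V → Fin d → ℝ) (q : Λ → Fin d → ℝ) : Prop :=
  AlgebraicIndependent ℚ
    (Sum.elim (fun x : V × Fin d => p x.1 x.2) (fun y : Λ × Fin d => q y.1 y.2))

open MvPolynomial in
/-- Key genericity lemma: the coordinates `q ℓ 0, …, q ℓ (d-1)` are linearly
independent over the field generated (over `ℚ`) by all the other coordinates. -/
private lemma qRow_indep {V Λ : Type} (d : ℕ)
    (p : V → Fin d → ℝ) (q : Λ → Fin d → ℝ)
    (hgen : GenericPQ d p q) (ℓ : Λ)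
    (c : Fin d → ℝ)
    (hc : ∀ k, c k ∈ IntermediateField.adjoin ℚ
      (Set.range (Sum.elim (fun x : V × Fin d => p x.1 x.2)
        (fun y : {j : Λ // j ≠ ℓ} × Fin d => q y.1.1 y.2))))
    (hsum : ∑ k, c k * q ℓ k = 0) : ∀ k, c k = 0 := by
  classical
  set g : (V × Fin d) ⊕ ({j : Λ // j ≠ ℓ} × Fin d) → ℝ :=
    Sum.elim (fun x : V × Fin d => p x.1 x.2)
      (fun y : {j : Λ // j ≠ ℓ} × Fin d => q y.1.1 y.2) with hgdef
  set f : (V × Fin d) ⊕ (Λ × Fin d) → ℝ :=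
    Sum.elim (fun x : V × Fin d => p x.1 x.2) (fun y : Λ × Fin d => q y.1 y.2) with hfdef
  have hrs : ∀ k, ∃ rs : MvPolynomial ((V × Fin d) ⊕ ({j : Λ // j ≠ ℓ} × Fin d)) ℚ ×
      MvPolynomial ((V × Fin d) ⊕ ({j : Λ // j ≠ ℓ} × Fin d)) ℚ,
      aeval g rs.2 ≠ 0 ∧ c k * aeval g rs.2 = aeval g rs.1 := by
    intro k
    obtain ⟨r, s, hx⟩ := (IntermediateField.mem_adjoin_range_iff ℚ g (c k)).1 (hc k)
    by_cases hs : aeval g s = 0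
    · exact ⟨(0, 1), by simp, by simp [hx, hs]⟩
    · exact ⟨(r, s), hs, by rw [hx, div_mul_cancel₀ _ hs]⟩
  choose rs hs0 hcr using hrs
  set r : Fin d → MvPolynomial ((V × Fin d) ⊕ ({j : Λ // j ≠ ℓ} × Fin d)) ℚ :=
    fun k => (rs k).1 with hrdef
  set s : Fin d → MvPolynomial ((V × Fin d) ⊕ ({j : Λ // j ≠ ℓ} × Fin d)) ℚ :=
    fun k => (rs k).2 with hsdef
  set emb : (V × Fin d) ⊕ ({j : Λ // j ≠ ℓ} × Fin d) → (V × Fin d) ⊕ (Λ × Fin d) :=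
    Sum.map id (fun y : {j : Λ // j ≠ ℓ} × Fin d => ((y.1 : Λ), y.2)) with hembdef
  have hcomp : f ∘ emb = g := by
    funext i; cases i <;> rfl
  set P : MvPolynomial ((V × Fin d) ⊕ (Λ × Fin d)) ℚ :=
    ∑ k : Fin d, rename emb (r k * ∏ j ∈ Finset.univ.erase k, s j) * X (Sum.inr (ℓ, k))
    with hPdef
  have hPval : ∀ (h : (V × Fin d) ⊕ (Λ × Fin d) → ℝ), h ∘ emb = g →
      aeval h P = ∑ k : Fin d,
        (aeval g (r k) * ∏ j ∈ Finset.univ.erase k, aeval g (s j)) * h (Sum.inr (ℓ, k)) := by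
    intro h hh
    rw [hPdef, map_sum]
    refine Finset.sum_congr rfl fun k _ => ?_
    rw [map_mul, aeval_rename, hh, aeval_X, map_mul, map_prod]
  have h1 : aeval f P = (∏ j : Fin d, aeval g (s j)) * ∑ k, c k * q ℓ k := by
    rw [hPval f hcomp, Finset.mul_sum]
    refine Finset.sum_congr rfl fun k _ => ?_
    have hfk : f (Sum.inr (ℓ, k)) = q ℓ k := rfl
    rw [hfk, ← hcr k,
      ← Finset.mul_prod_erase Finset.univ (fun j => aeval g (s j)) (Finset.mem_univ k)]
    ring
  have hP0 : P = 0 := by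
    have hinj : Function.Injective (aeval (R := ℚ) f) := hgen
    apply hinj
    rw [map_zero, h1, hsum, mul_zero]
  intro k0
  set f' : (V × Fin d) ⊕ (Λ × Fin d) → ℝ :=
    Sum.elim (fun x : V × Fin d => p x.1 x.2)
      (fun y : Λ × Fin d => if y.1 = ℓ then (if y.2 = k0 then (1:ℝ) else 0) else q y.1 y.2)
    with hf'def
  have hcomp' : f' ∘ emb = g := by
    funext i
    rcases i with x | y
    · rfl
    · have : (y.1 : Λ) ≠ ℓ := y.1.2
      simp only [hf'def, hembdef, Function.comp_apply, Sum.map_inr, Sum.elim_inr, this,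
        if_false, hgdef]
  have h2 : (0:ℝ) = aeval g (r k0) * ∏ j ∈ Finset.univ.erase k0, aeval g (s j) := by
    have h3 := hPval f' hcomp'
    rw [hP0, map_zero] at h3
    have hfk : ∀ k : Fin d, f' (Sum.inr (ℓ, k)) = if k = k0 then (1:ℝ) else 0 := by
      intro k; simp [hf'def]
    simp only [hfk, mul_ite, mul_one, mul_zero, Finset.sum_ite_eq', Finset.mem_univ,
      if_true] at h3
    exact h3
  have hprod : (∏ j ∈ Finset.univ.erase k0, aeval g (s j)) ≠ 0 :=
    Finset.prod_ne_zero_iff.2 fun j _ => hs0 j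
  have hr0 : aeval g (r k0) = 0 := by
    rcases mul_eq_zero.1 h2.symm with h | h
    · exact h
    · exact absurd h hprod
  have := hcr k0
  rw [hr0] at this
  rcases mul_eq_zero.1 this with h | h
  · exact h
  · exact absurd h (hs0 k0)

/-- Let `(G,p,q)` be a generic linearly constrained framework in `ℝ^d`,
`v` a vertex of `G` and `ℓ` a loop incident to `v` with
`rank R(G,p,q) = rank R(G-ℓ,p,q)`.  Then `ṗ(v) = 0` for every infinitesimal motion `ṗ`
of `(G,p,q)`. -/
theorem motion_fixes_vertex_of_rank_eq {V Λ : Type} [Fintype V] [DecidableEq V]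
    [Fintype Λ] (d : ℕ)
    (G : LoopedGraph V Λ) (p : V → Fin d → ℝ) (q : Λ → Fin d → ℝ)
    (hgen : GenericPQ d p q) (v : V) (ℓ : Λ) (hℓ : G.loopAt ℓ = v)
    (hrank : (lcRigidityMatrix d G p q).rank =
      ((lcRigidityMatrix d G p q).submatrix
        (Sum.map id (Subtype.val : {j : Λ // j ≠ ℓ} → Λ)) id).rank)
    (pdot : V → Fin d → ℝ)
    (hmotion : (lcRigidityMatrix d G p q).mulVec (fun x => pdot x.1 x.2) = 0) :
    pdot v = 0 := by
  classical
  set R := lcRigidityMatrix d G p q with hR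
  set B := R.submatrix (Sum.map id (Subtype.val : {j : Λ // j ≠ ℓ} → Λ)) id with hB
  set pdot' : V × Fin d → ℝ := fun x => pdot x.1 x.2 with hpdot'
  set g : (V × Fin d) ⊕ ({j : Λ // j ≠ ℓ} × Fin d) → ℝ :=
    Sum.elim (fun x : V × Fin d => p x.1 x.2)
      (fun y : {j : Λ // j ≠ ℓ} × Fin d => q y.1.1 y.2) with hgdef
  set F := IntermediateField.adjoin ℚ (Set.range g) with hF
  have hp : ∀ u k, p u k ∈ F := fun u k =>
    IntermediateField.subset_adjoin _ _ ⟨Sum.inl (u, k), rfl⟩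
  have hq : ∀ (j : Λ), j ≠ ℓ → ∀ k, q j k ∈ F := fun j hj k =>
    IntermediateField.subset_adjoin _ _ ⟨Sum.inr (⟨j, hj⟩, k), rfl⟩
  -- all entries of the reduced matrix `B` lie in `F`
  have hmem : ∀ rr x, B rr x ∈ F := by
    rintro (e | j) x
    · show edgeRow d p (e : Sym2 V) x ∈ F
      have : ∀ z : Sym2 V, edgeRow d p z x ∈ F := by
        intro z
        induction z using Sym2.ind with
        | _ u w =>
          show (if x.1 = u then p u x.2 - p w x.2 else 0) +
              (if x.1 = w then p w x.2 - p u x.2 else 0) ∈ F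
          refine add_mem ?_ ?_ <;> split_ifs <;>
            first
              | exact sub_mem (hp _ _) (hp _ _)
              | exact zero_mem F
      exact this _
    · show (if x.1 = G.loopAt (j : Λ) then q (j : Λ) x.2 else 0) ∈ F
      split_ifs
      · exact hq _ j.2 _
      · exact zero_mem F
  -- the kernels of `R` and `B` coincide
  have hBrow : ∀ (y : V × Fin d → ℝ) rr,
      B.mulVec y rr = R.mulVec y (Sum.map id Subtype.val rr) := fun y rr => rfl
  have hBR : ∀ y, R.mulVec y = 0 → B.mulVec y = 0 := by
    intro y hy
    funext rr
    rw [hBrow, hy]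
    rfl
  have hsub : LinearMap.ker R.mulVecLin ≤ LinearMap.ker B.mulVecLin := by
    intro y hy
    rw [LinearMap.mem_ker, Matrix.mulVecLin_apply] at hy ⊢
    exact hBR y hy
  have hrank' : Module.finrank ℝ (LinearMap.range R.mulVecLin) =
      Module.finrank ℝ (LinearMap.range B.mulVecLin) := hrank
  have e1 := LinearMap.finrank_range_add_finrank_ker R.mulVecLin
  have e2 := LinearMap.finrank_range_add_finrank_ker B.mulVecLin
  have hdim : Module.finrank ℝ (LinearMap.ker B.mulVecLin) ≤
      Module.finrank ℝ (LinearMap.ker R.mulVecLin) := by omega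
  have hkereq : LinearMap.ker R.mulVecLin = LinearMap.ker B.mulVecLin :=
    Submodule.eq_of_le_of_finrank_le hsub hdim
  have hRB : ∀ y, B.mulVec y = 0 → R.mulVec y = 0 := by
    intro y hy
    have hy' : y ∈ LinearMap.ker B.mulVecLin := by
      rw [LinearMap.mem_ker, Matrix.mulVecLin_apply]; exact hy
    rw [← hkereq, LinearMap.mem_ker, Matrix.mulVecLin_apply] at hy'
    exact hy'
  -- decompose `pdot'` along a basis of `ℝ` over `F`
  let b := Module.Basis.ofVectorSpace F ℝ
  have hmotion' : R.mulVec pdot' = 0 := hmotion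
  have main : ∀ (i : Module.Basis.ofVectorSpaceIndex F ℝ) (k : Fin d),
      b.repr (pdot' (v, k)) i = 0 := by
    intro i
    set w : V × Fin d → ℝ := fun x => ((b.repr (pdot' x) i : F) : ℝ) with hw
    have hBw : B.mulVec w = 0 := by
      funext rr
      show (∑ x, B rr x * w x) = 0
      have hzero : (∑ x, (⟨B rr x, hmem rr x⟩ : F) • pdot' x) = 0 := by
        have : (∑ x, (⟨B rr x, hmem rr x⟩ : F) • pdot' x) = ∑ x, B rr x * pdot' x := by
          refine Finset.sum_congr rfl fun x _ => ?_
          rw [IntermediateField.smul_def, smul_eq_mul]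
        rw [this]
        have := congrFun (hBR pdot' hmotion') rr
        exact this
      have hrepr : (∑ x, (⟨B rr x, hmem rr x⟩ : F) * b.repr (pdot' x) i) = 0 := by
        have := congrArg (fun z => b.repr z i) hzero
        simpa [map_sum, Finsupp.finset_sum_apply, map_smul, Finsupp.smul_apply,
          smul_eq_mul] using this
      have := congrArg (fun z : F => (z : ℝ)) hrepr
      push_cast at this
      simpa [hw] using this
    have hRw : R.mulVec w = 0 := hRB w hBw
    have h0 : (∑ x : V × Fin d, (if x.1 = G.loopAt ℓ then q ℓ x.2 else 0) * w x) = 0 :=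
      congrFun hRw (Sum.inr ℓ)
    rw [hℓ] at h0
    have h1 : (∑ k : Fin d, q ℓ k * w (v, k)) = 0 := by
      rw [Fintype.sum_prod_type] at h0
      rw [Finset.sum_comm] at h0
      simpa [ite_mul, zero_mul, Finset.sum_ite_eq', Finset.mem_univ, if_true] using h0
    have hc0 : ∀ k : Fin d, w (v, k) = 0 := by
      refine qRow_indep d p q hgen ℓ (fun k => w (v, k)) ?_ ?_
      · intro k
        exact SetLike.coe_mem _
      · rw [← h1]
        exact Finset.sum_congr rfl fun k _ => mul_comm _ _
    intro k
    have h4 : ((b.repr (pdot' (v, k)) i : F) : ℝ) = 0 := hc0 k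
    exact_mod_cast h4
  funext k
  have hz : b.repr (pdot' (v, k)) = 0 := Finsupp.ext fun i => main i k
  have : pdot' (v, k) = 0 := by
    have := b.repr.map_eq_zero_iff.mp hz
    exact this
  exact this
end

section
/- Let d ≥ 1, let G = (V,E,L) be a d-sparse looped simple graph, and let H be an induced subgraph of G on vertex set W ⊆ V which is d-tight. Let G' be the looped simple graph obtained from G by deleting all edges and loops of H and adding d loops at each vertex of W. Then G' is d-sparse. Moreover, if G is K_{d+2}-free then so is G'. -/
/-- `i(X)`: the number of edges and loops of a looped simple graph induced by `X`. -/
noncomputable def inducedCount {V Λ : Type*} (G : LoopedGraph V Λ) (X : Set V) : ℕ :=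
  {e ∈ G.graph.edgeSet | ∀ v ∈ e, v ∈ X}.ncard + {j : Λ | G.loopAt j ∈ X}.ncard

/-- A looped simple graph is `k`-sparse if `i(X) ≤ k|X|` for all `X ⊆ V`. -/
def LCSparse {V Λ : Type*} (k : ℕ) (G : LoopedGraph V Λ) : Prop :=
  ∀ X : Set V, inducedCount G X ≤ k * X.ncard

/-- Supermodularity of the induced count. -/
lemma inducedCount_supermodular {V Λ : Type} [Fintype V] [Fintype Λ]
    (G : LoopedGraph V Λ) (X W : Set V) :
    inducedCount G X + inducedCount G W ≤
      inducedCount G (X ∪ W) + inducedCount G (X ∩ W) := by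
  classical
  set eS : Set V → Set (Sym2 V) := fun Y => {e ∈ G.graph.edgeSet | ∀ v ∈ e, v ∈ Y} with heS
  set lS : Set V → Set Λ := fun Y => {j : Λ | G.loopAt j ∈ Y} with hlS
  have hEi : eS X ∩ eS W = eS (X ∩ W) := by
    ext e
    simp only [heS, Set.mem_inter_iff, Set.mem_setOf_eq, Set.mem_sep_iff]
    constructor
    · rintro ⟨⟨h1, h2⟩, ⟨_, h4⟩⟩
      exact ⟨h1, fun v hv => ⟨h2 v hv, h4 v hv⟩⟩
    · rintro ⟨h1, h2⟩
      exact ⟨⟨h1, fun v hv => (h2 v hv).1⟩, ⟨h1, fun v hv => (h2 v hv).2⟩⟩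
  have hEu : eS X ∪ eS W ⊆ eS (X ∪ W) := by
    rintro e (⟨h1, h2⟩ | ⟨h1, h2⟩)
    · exact ⟨h1, fun v hv => Or.inl (h2 v hv)⟩
    · exact ⟨h1, fun v hv => Or.inr (h2 v hv)⟩
  have hLu : lS X ∪ lS W = lS (X ∪ W) := by
    ext j; simp [hlS]
  have hLi : lS X ∩ lS W = lS (X ∩ W) := by
    ext j; simp [hlS]
  have hcardE : (eS X).ncard + (eS W).ncard ≤ (eS (X ∪ W)).ncard + (eS (X ∩ W)).ncard := by
    have h1 := Set.ncard_union_add_ncard_inter (eS X) (eS W) (Set.toFinite _) (Set.toFinite _)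
    have h2 : (eS X ∪ eS W).ncard ≤ (eS (X ∪ W)).ncard :=
      Set.ncard_le_ncard hEu (Set.toFinite _)
    rw [hEi] at h1
    omega
  have hcardL : (lS X).ncard + (lS W).ncard = (lS (X ∪ W)).ncard + (lS (X ∩ W)).ncard := by
    have h1 := Set.ncard_union_add_ncard_inter (lS X) (lS W) (Set.toFinite _) (Set.toFinite _)
    rw [hLi, hLu] at h1
    omega
  have hdef : ∀ Y, inducedCount G Y = (eS Y).ncard + (lS Y).ncard := fun _ => rfl
  rw [hdef, hdef, hdef, hdef]
  omega

/-- Let `G` be a `d`-sparse looped simple graph and `H` the induced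
subgraph of `G` on `W ⊆ V`, assumed `d`-tight (i.e. `i(W) = d|W|`).  Let `G'` be the
looped simple graph obtained from `G` by deleting all edges and loops of `H` and adding
`d` loops at each vertex of `W`.  Then `G'` is `d`-sparse, and if `G` is `K_{d+2}`-free
then so is `G'`. -/
theorem tight_subgraph_replacement_sparse {V Λ : Type} [Fintype V] [Fintype Λ]
    (d : ℕ) (hd : 1 ≤ d) (G : LoopedGraph V Λ) (hG : LCSparse d G)
    (W : Set V) (htight : inducedCount G W = d * W.ncard)
    (G' : LoopedGraph V ({j : Λ // G.loopAt j ∉ W} ⊕ (↥W × Fin d)))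
    (hadj : ∀ a b : V, G'.graph.Adj a b ↔ (G.graph.Adj a b ∧ ¬ (a ∈ W ∧ b ∈ W)))
    (hloop : G'.loopAt = Sum.elim (fun j => G.loopAt j.1) (fun z => z.1.1)) :
    LCSparse d G' ∧ (G.graph.CliqueFree (d + 2) → G'.graph.CliqueFree (d + 2)) := by
  classical
  constructor
  · intro X
    set eS : Set V → Set (Sym2 V) := fun Y => {e ∈ G.graph.edgeSet | ∀ v ∈ e, v ∈ Y} with heS
    set lS : Set V → Set Λ := fun Y => {j : Λ | G.loopAt j ∈ Y} with hlS
    -- the edge set of G' induced by X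
    have hE : {e ∈ G'.graph.edgeSet | ∀ v ∈ e, v ∈ X} = eS X \ eS (X ∩ W) := by
      ext e
      induction e using Sym2.ind with
      | _ a b =>
        simp only [heS, Set.mem_sep_iff, Set.mem_diff, SimpleGraph.mem_edgeSet, hadj,
          Sym2.mem_iff, Set.mem_inter_iff]
        constructor
        · rintro ⟨⟨hadjab, hnw⟩, hmem⟩
          refine ⟨⟨hadjab, hmem⟩, ?_⟩
          rintro ⟨_, hall⟩
          exact hnw ⟨(hall a (Or.inl rfl)).2, (hall b (Or.inr rfl)).2⟩
        · rintro ⟨⟨hadjab, hmem⟩, hnot⟩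
          refine ⟨⟨hadjab, ?_⟩, hmem⟩
          rintro ⟨haW, hbW⟩
          exact hnot ⟨hadjab, by rintro v (rfl | rfl) <;> simp_all⟩
    have hEsub : eS (X ∩ W) ⊆ eS X := by
      rintro e ⟨h1, h2⟩; exact ⟨h1, fun v hv => (h2 v hv).1⟩
    have hEcard : {e ∈ G'.graph.edgeSet | ∀ v ∈ e, v ∈ X}.ncard + (eS (X ∩ W)).ncard
        = (eS X).ncard := by
      rw [hE]
      exact Set.ncard_diff_add_ncard_of_subset hEsub (Set.toFinite _)
    -- loops of G' induced by X
    set A : Set {j : Λ // G.loopAt j ∉ W} := {j | G.loopAt j.1 ∈ X} with hA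
    set B : Set (↥W × Fin d) := {z | (z.1 : V) ∈ X} with hB
    have hL : {j' | G'.loopAt j' ∈ X} = Sum.inl '' A ∪ Sum.inr '' B := by
      ext j'
      cases j' with
      | inl j => simp [hloop, hA]
      | inr z => simp [hloop, hB]
    have hLdisj : Disjoint (Sum.inl '' A) (Sum.inr '' B) := by
      rw [Set.disjoint_left]
      rintro x ⟨a, _, rfl⟩ ⟨b, _, hb⟩
      exact Sum.inl_ne_inr hb.symm
    have hAcard : A.ncard = (lS X \ lS (X ∩ W)).ncard := by
      have himg : Subtype.val '' A = lS X \ lS (X ∩ W) := by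
        ext j
        simp only [hA, hlS, Set.mem_image, Set.mem_diff, Set.mem_setOf_eq, Set.mem_inter_iff]
        constructor
        · rintro ⟨⟨j, hj⟩, hjX, rfl⟩
          exact ⟨hjX, fun h => hj h.2⟩
        · rintro ⟨hjX, hj⟩
          exact ⟨⟨j, fun h => hj ⟨hjX, h⟩⟩, hjX, rfl⟩
      rw [← himg, Set.ncard_image_of_injective _ Subtype.val_injective]
    have hBcard : B.ncard = d * (X ∩ W).ncard := by
      have hBeq : B = {w : ↥W | (w : V) ∈ X} ×ˢ (Set.univ : Set (Fin d)) := by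
        ext z; simp [hB]
      have hwcard : ({w : ↥W | (w : V) ∈ X}).ncard = (X ∩ W).ncard := by
        have : Subtype.val '' {w : ↥W | (w : V) ∈ X} = X ∩ W := by
          ext v
          simp only [Set.mem_image, Set.mem_setOf_eq, Set.mem_inter_iff]
          constructor
          · rintro ⟨⟨v, hv⟩, hvX, rfl⟩; exact ⟨hvX, hv⟩
          · rintro ⟨hvX, hvW⟩; exact ⟨⟨v, hvW⟩, hvX, rfl⟩
        rw [← this, Set.ncard_image_of_injective _ Subtype.val_injective]
      rw [hBeq, ← Nat.card_coe_set_eq, Nat.card_congr (Equiv.Set.prod _ _),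
        Nat.card_prod, Nat.card_coe_set_eq, Nat.card_coe_set_eq, hwcard,
        Set.ncard_univ, Nat.card_eq_fintype_card, Fintype.card_fin, mul_comm]
    have hLcard : {j' | G'.loopAt j' ∈ X}.ncard
        = (lS X \ lS (X ∩ W)).ncard + d * (X ∩ W).ncard := by
      rw [hL, Set.ncard_union_eq hLdisj (Set.toFinite _) (Set.toFinite _),
        Set.ncard_image_of_injective _ Sum.inl_injective,
        Set.ncard_image_of_injective _ Sum.inr_injective, hAcard, hBcard]
    have hLsub : lS (X ∩ W) ⊆ lS X := fun j hj => hj.1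
    have hLdiff : (lS X \ lS (X ∩ W)).ncard + (lS (X ∩ W)).ncard = (lS X).ncard :=
      Set.ncard_diff_add_ncard_of_subset hLsub (Set.toFinite _)
    -- key identity: i_{G'}(X) + i_G(X ∩ W) = i_G(X) + d * |X ∩ W|
    have hkey : inducedCount G' X + inducedCount G (X ∩ W)
        = inducedCount G X + d * (X ∩ W).ncard := by
      have hdefG : ∀ Y, inducedCount G Y = (eS Y).ncard + (lS Y).ncard := fun _ => rfl
      have hdefG' : inducedCount G' X =
          {e ∈ G'.graph.edgeSet | ∀ v ∈ e, v ∈ X}.ncard + {j' | G'.loopAt j' ∈ X}.ncard := rfl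
      rw [hdefG', hdefG, hdefG, hLcard]
      omega
    -- supermodularity and sparsity bounds
    have hsup := inducedCount_supermodular G X W
    have hXuW := hG (X ∪ W)
    have hXiW : (X ∪ W).ncard + (X ∩ W).ncard = X.ncard + W.ncard :=
      Set.ncard_union_add_ncard_inter X W (Set.toFinite _) (Set.toFinite _)
    have hmul : d * (X ∪ W).ncard + d * (X ∩ W).ncard = d * X.ncard + d * W.ncard := by
      rw [← Nat.mul_add, ← Nat.mul_add, hXiW]
    omega
  · intro hfree
    have hle : G'.graph ≤ G.graph := by
      intro a b h
      exact ((hadj a b).1 h).1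
    exact hfree.anti hle
end

section
/- Let d ≥ 1 and let G = (V,E,L) be a looped simple graph containing, as a subgraph on a vertex set W ⊆ V, a looped simple graph H that is minimally rigid in ℝ^d (i.e. independent and rigid in ℝ^d). Let H' be another looped simple graph on the same vertex set W that is minimally rigid in ℝ^d, and let G' be obtained from G by deleting the edges and loops of H and adding those of H' (assuming this does not create parallel edges or repeated loops). Then G is independent in ℝ^d if and only if G' is independent in ℝ^d. -/
/-- A looped simple graph is independent in `ℝ^d` if the rows of its rigidity matrix are
linearly independent for every generic `(p,q)`. -/
def LCIndependent {V Λ : Type*} [DecidableEq V] (d : ℕ) (G : LoopedGraph V Λ) : Prop :=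
  ∀ (p : V → Fin d → ℝ) (q : Λ → Fin d → ℝ), GenericPQ d p q →
    LinearIndependent ℝ (fun r => lcRigidityMatrix d G p q r)

/-- A looped simple graph is rigid in `ℝ^d` if its rigidity matrix has rank `d|V|` for
every generic `(p,q)`. -/
def LCRigid {V Λ : Type*} [Fintype V] [DecidableEq V] (d : ℕ) (G : LoopedGraph V Λ) : Prop :=
  ∀ (p : V → Fin d → ℝ) (q : Λ → Fin d → ℝ), GenericPQ d p q →
    (lcRigidityMatrix d G p q).rank = d * Fintype.card V

/-- A looped simple graph is minimally rigid in `ℝ^d` if it is independent and rigid. -/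
def LCMinRigid {V Λ : Type*} [Fintype V] [DecidableEq V] (d : ℕ)
    (G : LoopedGraph V Λ) : Prop :=
  LCIndependent d G ∧ LCRigid d G

open Set Submodule Function Cardinal Matrix
open scoped Cardinal

namespace MinRigidAux

lemma exists_transcendental {ι : Type} [Finite ι] (f : ι → ℝ)
    (hf : AlgebraicIndependent ℚ f) :
    ∃ x : ℝ, AlgebraicIndependent ℚ (fun o : Option ι => o.elim x f) := by
  set A := Algebra.adjoin ℚ (Set.range f) with hA
  have hcard : #A ≤ Cardinal.aleph0 := by
    rw [hA, Algebra.adjoin_range_eq_range_aeval]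
    refine le_trans (Cardinal.mk_le_of_surjective
      (f := (MvPolynomial.aeval f).rangeRestrict) ?_) ?_
    · exact AlgHom.rangeRestrict_surjective _
    · refine le_trans MvPolynomial.cardinalMk_le_max ?_
      have h1 : #ℚ ≤ Cardinal.aleph0 := Cardinal.mk_le_aleph0
      have h2 : #ι ≤ Cardinal.aleph0 := Cardinal.mk_le_aleph0
      simp [max_le, h1, h2]
  by_contra hcon
  push_neg at hcon
  have halg : ∀ x : ℝ, IsAlgebraic A x := by
    intro x
    have h1 := hcon x
    rw [hf.option_iff_transcendental x] at h1
    rwa [Transcendental, not_not] at h1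
  haveI : Algebra.IsAlgebraic A ℝ := ⟨halg⟩
  haveI : Module.IsTorsionFree A ℝ := by
    infer_instance
  have hbig := Algebra.IsAlgebraic.cardinalMk_le_max A ℝ
  rw [Cardinal.mk_real] at hbig
  have : Cardinal.continuum ≤ Cardinal.aleph0 :=
    hbig.trans (max_le hcard le_rfl)
  exact absurd this (not_le.mpr Cardinal.aleph0_lt_continuum)

lemma exists_extend_fin {ι : Type} [Finite ι] (f : ι → ℝ)
    (hf : AlgebraicIndependent ℚ f) (n : ℕ) :
    ∃ g : ι ⊕ Fin n → ℝ, g ∘ Sum.inl = f ∧ AlgebraicIndependent ℚ g := by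
  induction n with
  | zero =>
    refine ⟨Sum.elim f Fin.elim0, rfl, ?_⟩
    have he : Sum.elim f Fin.elim0 = f ∘ (Equiv.sumEmpty ι (Fin 0)) := by
      funext s
      rcases s with i | j
      · rfl
      · exact j.elim0
    rw [he]
    exact hf.comp _ (Equiv.sumEmpty ι (Fin 0)).injective
  | succ n ih =>
    obtain ⟨g, hgl, hg⟩ := ih
    obtain ⟨x, hx⟩ := exists_transcendental g hg
    let e : ι ⊕ Fin (n + 1) ≃ Option (ι ⊕ Fin n) :=
      { toFun := fun s => match s with
          | Sum.inl i => some (Sum.inl i)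
          | Sum.inr j => Fin.lastCases none (fun k => some (Sum.inr k)) j
        invFun := fun o => match o with
          | none => Sum.inr (Fin.last n)
          | some (Sum.inl i) => Sum.inl i
          | some (Sum.inr k) => Sum.inr k.castSucc
        left_inv := by
          rintro (i | j)
          · rfl
          · induction j using Fin.lastCases with
            | last => simp
            | cast k => simp
        right_inv := by
          rintro (_ | (i | k))
          · simp
          · rfl
          · simp }
    refine ⟨(fun o : Option (ι ⊕ Fin n) => o.elim x g) ∘ e, ?_, hx.comp _ e.injective⟩
    funext i
    exact congrFun hgl i

lemma exists_extend {ι κ : Type} [Finite ι] [Finite κ] (f : ι → ℝ)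
    (hf : AlgebraicIndependent ℚ f) :
    ∃ h : κ → ℝ, AlgebraicIndependent ℚ (Sum.elim f h) := by
  obtain ⟨n, ⟨eκ⟩⟩ := Finite.exists_equiv_fin κ
  obtain ⟨g, hgl, hg⟩ := exists_extend_fin f hf n
  refine ⟨fun k => g (Sum.inr (eκ k)), ?_⟩
  have he : Sum.elim f (fun k => g (Sum.inr (eκ k))) = g ∘ Sum.map id eκ := by
    funext s
    rcases s with i | k
    · exact (congrFun hgl i).symm
    · rfl
  rw [he]
  exact hg.comp _ (Function.Injective.sumMap (fun a b h => h) eκ.injective)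


variable {V : Type*} [DecidableEq V]

open scoped Classical in
noncomputable def extZero (d : ℕ) (W : Set V) :
    ((↥W × Fin d) → ℝ) →ₗ[ℝ] ((V × Fin d) → ℝ) where
  toFun f x := if h : x.1 ∈ W then f (⟨x.1, h⟩, x.2) else 0
  map_add' f g := by funext x; by_cases h : x.1 ∈ W <;> simp [h]
  map_smul' c f := by funext x; by_cases h : x.1 ∈ W <;> simp [h]

def suppSub (d : ℕ) (W : Set V) : Submodule ℝ ((V × Fin d) → ℝ) where
  carrier := {f | ∀ x : V × Fin d, x.1 ∉ W → f x = 0}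
  add_mem' := by intro a b ha hb x hx; simp only [Pi.add_apply, ha x hx, hb x hx, add_zero]
  zero_mem' := fun x _ => rfl
  smul_mem' := by intro c f hf x hx; simp only [Pi.smul_apply, hf x hx, smul_zero]

lemma extZero_injective (d : ℕ) (W : Set V) : Function.Injective (extZero d W) := by
  intro f g h
  funext y
  have := congrFun h (y.1.1, y.2)
  simpa [extZero, y.1.2] using this

lemma ker_extZero (d : ℕ) (W : Set V) : LinearMap.ker (extZero d W) = ⊥ :=
  LinearMap.ker_eq_bot.mpr (extZero_injective d W)

lemma range_extZero (d : ℕ) (W : Set V) :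
    LinearMap.range (extZero d W) = suppSub d W := by
  ext f
  constructor
  · rintro ⟨g, rfl⟩
    intro x hx
    simp [extZero, hx]
  · intro hf
    refine ⟨fun y => f (y.1.1, y.2), ?_⟩
    funext x
    by_cases h : x.1 ∈ W
    · simp [extZero, h]
    · simp [extZero, h, (hf x h).symm]

lemma edgeRow_map (d : ℕ) (W : Set V) (p : V → Fin d → ℝ) (s : Sym2 ↥W) :
    edgeRow d p (Sym2.map Subtype.val s) =
      extZero d W (edgeRow d (fun w : ↥W => p w.1) s) := by
  induction s using Sym2.ind with
  | _ a b =>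
    funext x
    simp only [Sym2.map_pair_eq, edgeRow, Sym2.lift_mk, extZero, LinearMap.coe_mk,
      AddHom.coe_mk]
    by_cases h : x.1 ∈ W
    · rw [dif_pos h]
      have h1 : ((⟨x.1, h⟩ : ↥W) = a) ↔ x.1 = (a : V) := Subtype.ext_iff
      have h2 : ((⟨x.1, h⟩ : ↥W) = b) ↔ x.1 = (b : V) := Subtype.ext_iff
      congr 1
      · by_cases hxa : x.1 = (a : V)
        · rw [if_pos hxa, if_pos (h1.mpr hxa)]
        · rw [if_neg hxa, if_neg (fun hc => hxa (h1.mp hc))]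
      · by_cases hxb : x.1 = (b : V)
        · rw [if_pos hxb, if_pos (h2.mpr hxb)]
        · rw [if_neg hxb, if_neg (fun hc => hxb (h2.mp hc))]
    · rw [dif_neg h, if_neg, if_neg, add_zero]
      · exact fun hc => h (hc ▸ b.2)
      · exact fun hc => h (hc ▸ a.2)

lemma loopRow_map (d : ℕ) (W : Set V) (v₀ : ↥W) (c : Fin d → ℝ) :
    (fun x : V × Fin d => if x.1 = (v₀ : V) then c x.2 else 0) =
      extZero d W (fun y : ↥W × Fin d => if y.1 = v₀ then c y.2 else 0) := by
  funext x
  simp only [extZero, LinearMap.coe_mk, AddHom.coe_mk]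
  by_cases h : x.1 ∈ W
  · rw [dif_pos h]
    have h1 : ((⟨x.1, h⟩ : ↥W) = v₀) ↔ x.1 = (v₀ : V) := Subtype.ext_iff
    by_cases hx : x.1 = (v₀ : V)
    · rw [if_pos hx, if_pos (h1.mpr hx)]
    · rw [if_neg hx, if_neg (fun hc => hx (h1.mp hc))]
  · rw [dif_neg h, if_neg (fun hc : x.1 = (v₀ : V) => h (hc ▸ v₀.2))]

lemma span_rows_eq_top {ι : Type*} [Fintype ι] {n : Type*} [Fintype n] [DecidableEq n]
    (M : Matrix ι n ℝ) (h : M.rank = Fintype.card n) :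
    Submodule.span ℝ (Set.range fun i => M i) = ⊤ := by
  have h1 : (Mᵀ).rank = Module.finrank ℝ (span ℝ (range ((Mᵀ)ᵀ))) :=
    Matrix.rank_eq_finrank_span_cols _
  rw [Matrix.transpose_transpose, Matrix.rank_transpose, h] at h1
  apply Submodule.eq_top_of_finrank_eq
  rw [← h1, Module.finrank_pi]

lemma li_iff_sum {F : Type*} [AddCommGroup F] [Module ℝ F] {ι κ₁ κ₂ : Type*}
    (rows : ι → F) (e : ι ≃ κ₁ ⊕ κ₂) (u : κ₁ → F) (w : κ₂ → F)
    (hrows : ∀ i, rows i = Sum.elim u w (e i))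
    (hu : LinearIndependent ℝ u) (S : Submodule ℝ F) (huS : span ℝ (range u) = S) :
    LinearIndependent ℝ rows ↔
      (LinearIndependent ℝ w ∧ Disjoint S (span ℝ (range w))) := by
  have h1 : rows = (Sum.elim u w) ∘ e := funext hrows
  rw [h1, linearIndependent_equiv e, linearIndependent_sum, Sum.elim_comp_inl,
    Sum.elim_comp_inr, huS]
  exact ⟨fun ⟨_, b, c⟩ => ⟨b, c⟩, fun ⟨b, c⟩ => ⟨hu, b, c⟩⟩

def Smell {Λ : Type*} {W : Set V} (K : LoopedGraph ↥W Λ) (s : Sym2 V) : Prop :=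
  ∃ t ∈ K.graph.edgeSet, Sym2.map (Subtype.val) t = s

lemma smell_iff {Λ : Type*} {W : Set V} (K : LoopedGraph ↥W Λ) (a b : V) :
    Smell K s(a, b) ↔ ∃ (ha : a ∈ W) (hb : b ∈ W), K.graph.Adj ⟨a, ha⟩ ⟨b, hb⟩ := by
  constructor
  · rintro ⟨t, ht, hmap⟩
    induction t using Sym2.ind with
    | _ x y =>
      rw [Sym2.map_pair_eq, Sym2.eq_iff] at hmap
      rcases hmap with ⟨h1, h2⟩ | ⟨h1, h2⟩
      · subst h1; subst h2
        exact ⟨x.2, y.2, (SimpleGraph.mem_edgeSet _).mp ht⟩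
      · subst h1; subst h2
        exact ⟨y.2, x.2, ((SimpleGraph.mem_edgeSet _).mp ht).symm⟩
  · rintro ⟨ha, hb, h⟩
    exact ⟨s(⟨a, ha⟩, ⟨b, hb⟩), (SimpleGraph.mem_edgeSet _).mpr h, by rw [Sym2.map_pair_eq]⟩

noncomputable def restRows {Λh Λ₀ : Type*} (d : ℕ) (W : Set V)
    (G : LoopedGraph V (Λh ⊕ Λ₀)) (K : LoopedGraph ↥W Λh)
    (p : V → Fin d → ℝ) (q₀ : Λ₀ → Fin d → ℝ) :
    ({e : ↥G.graph.edgeSet // ¬ Smell K e.1} ⊕ Λ₀) → ((V × Fin d) → ℝ) :=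
  Sum.elim (fun r => edgeRow d p r.1.1)
    (fun j x => if x.1 = G.loopAt (Sum.inr j) then q₀ j x.2 else 0)

lemma generic_restrict {Λh Λ₀ : Type*} {d : ℕ} (W : Set V) {p : V → Fin d → ℝ}
    {q : Λh ⊕ Λ₀ → Fin d → ℝ} (h : GenericPQ d p q) :
    GenericPQ d (fun w : ↥W => p w.1) (fun j => q (Sum.inl j)) := by
  have hinj : Function.Injective (Sum.map (fun x : ↥W × Fin d => ((x.1 : V), x.2))
      (fun y : Λh × Fin d => ((Sum.inl y.1 : Λh ⊕ Λ₀), y.2))) := by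
    apply Function.Injective.sumMap
    · intro a b hab
      simp only [Prod.mk.injEq] at hab
      exact Prod.ext (Subtype.ext hab.1) hab.2
    · intro a b hab
      simp only [Prod.mk.injEq, Sum.inl.injEq] at hab
      exact Prod.ext hab.1 hab.2
  have h2 := h.comp _ hinj
  show AlgebraicIndependent ℚ _
  have he : (Sum.elim (fun x : ↥W × Fin d => (fun w : ↥W => p w.1) x.1 x.2)
      (fun y : Λh × Fin d => (fun j => q (Sum.inl j)) y.1 y.2)) =
      (Sum.elim (fun x : V × Fin d => p x.1 x.2)
        (fun y : (Λh ⊕ Λ₀) × Fin d => q y.1 y.2)) ∘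
      (Sum.map (fun x : ↥W × Fin d => ((x.1 : V), x.2))
        (fun y : Λh × Fin d => ((Sum.inl y.1 : Λh ⊕ Λ₀), y.2))) := by
    funext s
    rcases s with x | y <;> rfl
  rw [GenericPQ] at *
  rw [he]
  exact h2


lemma graph_li_iff {Λh Λ₀ : Type*} [Fintype Λh] (d : ℕ) (W : Set V) [Fintype ↥W]
    (G : LoopedGraph V (Λh ⊕ Λ₀)) (K : LoopedGraph ↥W Λh)
    (hsub : ∀ a b : ↥W, K.graph.Adj a b → G.graph.Adj a.1 b.1)
    (hloop : ∀ j, G.loopAt (Sum.inl j) = (K.loopAt j).1)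
    (hKmin : LCMinRigid d K)
    (p : V → Fin d → ℝ) (q : (Λh ⊕ Λ₀) → Fin d → ℝ) (hgen : GenericPQ d p q) :
    LinearIndependent ℝ (fun r => lcRigidityMatrix d G p q r) ↔
      (LinearIndependent ℝ (restRows d W G K p (fun j => q (Sum.inr j))) ∧
        Disjoint (suppSub d W)
          (span ℝ (range (restRows d W G K p (fun j => q (Sum.inr j)))))) := by
  classical
  haveI : Fintype ↥K.graph.edgeSet := Fintype.ofFinite _
  set p' : ↥W → Fin d → ℝ := fun w => p w.1 with hp'
  have hgenK : GenericPQ d p' (fun j => q (Sum.inl j)) := generic_restrict W hgen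
  set Krows : (↥K.graph.edgeSet ⊕ Λh) → ((↥W × Fin d) → ℝ) :=
    fun r => lcRigidityMatrix d K p' (fun j => q (Sum.inl j)) r with hKrows
  have hmem : ∀ t : ↥K.graph.edgeSet, Sym2.map (Subtype.val) t.1 ∈ G.graph.edgeSet := by
    rintro ⟨t, ht⟩
    induction t using Sym2.ind with
    | _ a b =>
      rw [Sym2.map_pair_eq, SimpleGraph.mem_edgeSet]
      exact hsub a b ((SimpleGraph.mem_edgeSet _).mp ht)
  set gmap : ↥K.graph.edgeSet → {e : ↥G.graph.edgeSet // Smell K e.1} :=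
    (fun t => ⟨⟨Sym2.map Subtype.val t.1, hmem t⟩, ⟨t.1, t.2, rfl⟩⟩) with hgmap
  have hbij : Function.Bijective gmap := by
    constructor
    · intro s t hst
      have h1 : Sym2.map (Subtype.val) s.1 = Sym2.map (Subtype.val) t.1 :=
        congrArg (fun z => z.1.1) hst
      exact Subtype.ext (Sym2.map.injective Subtype.val_injective h1)
    · rintro ⟨⟨s, hs⟩, t, ht, hmap⟩
      exact ⟨⟨t, ht⟩, Subtype.ext (Subtype.ext hmap)⟩
  set e₁ : ↥G.graph.edgeSet ≃ (↥K.graph.edgeSet ⊕ {e : ↥G.graph.edgeSet // ¬ Smell K e.1}) :=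
    (Equiv.sumCompl fun e : ↥G.graph.edgeSet => Smell K e.1).symm.trans
      (Equiv.sumCongr (Equiv.ofBijective gmap hbij).symm (Equiv.refl _)) with he₁
  set etot : (↥G.graph.edgeSet ⊕ (Λh ⊕ Λ₀)) ≃
      ((↥K.graph.edgeSet ⊕ Λh) ⊕ ({e : ↥G.graph.edgeSet // ¬ Smell K e.1} ⊕ Λ₀)) :=
    (e₁.sumCongr (Equiv.refl (Λh ⊕ Λ₀))).trans (Equiv.sumSumSumComm _ _ _ _) with hetot
  refine li_iff_sum _ etot (fun i => extZero d W (Krows i)) _ ?_ ?_ _ ?_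
  · rintro (s | (j | j))
    · by_cases hsm : Smell K s.1
      · set t := (Equiv.ofBijective gmap hbij).symm ⟨s, hsm⟩ with hts
        have hgt : gmap t = ⟨s, hsm⟩ := (Equiv.ofBijective gmap hbij).apply_symm_apply _
        have hs1 : s.1 = Sym2.map Subtype.val t.1 := (congrArg (fun z => z.1.1) hgt).symm
        have he1 : e₁ s = Sum.inl t := by
          rw [he₁, Equiv.trans_apply, Equiv.sumCompl_symm_apply_of_pos (p := fun e : ↥G.graph.edgeSet => Smell K e.1) hsm]
          rfl
        have he : etot (Sum.inl s) = Sum.inl (Sum.inl t) := by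
          rw [hetot, Equiv.trans_apply, Equiv.sumCongr_apply, Sum.map_inl, he1]
          rfl
        rw [he]
        show edgeRow d p s.1 = extZero d W (Krows (Sum.inl t))
        rw [hs1, edgeRow_map]
        rfl
      · have he1 : e₁ s = Sum.inr ⟨s, hsm⟩ := by
          rw [he₁, Equiv.trans_apply, Equiv.sumCompl_symm_apply_of_neg (p := fun e : ↥G.graph.edgeSet => Smell K e.1) hsm]
          rfl
        have he : etot (Sum.inl s) = Sum.inr (Sum.inl ⟨s, hsm⟩) := by
          rw [hetot, Equiv.trans_apply, Equiv.sumCongr_apply, Sum.map_inl, he1]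
          rfl
        rw [he]
        rfl
    · have he : etot (Sum.inr (Sum.inl j)) = Sum.inl (Sum.inr j) := rfl
      rw [he]
      show (fun x : V × Fin d => if x.1 = G.loopAt (Sum.inl j) then q (Sum.inl j) x.2 else 0)
        = extZero d W (Krows (Sum.inr j))
      simp only [hloop j]
      exact loopRow_map d W (K.loopAt j) (q (Sum.inl j))
    · have he : etot (Sum.inr (Sum.inr j)) = Sum.inr (Sum.inr j) := rfl
      rw [he]
      rfl
  · have hKli := hKmin.1 p' (fun j => q (Sum.inl j)) hgenK
    exact hKli.map' (extZero d W) (ker_extZero d W)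
  · have hsp : span ℝ (range Krows) = ⊤ := by
      apply span_rows_eq_top
      rw [hKmin.2 p' _ hgenK, Fintype.card_prod, Fintype.card_fin, mul_comm]
    calc span ℝ (range fun i => extZero d W (Krows i))
        = Submodule.map (extZero d W) (span ℝ (range Krows)) := by
          rw [← Submodule.span_image, ← Set.range_comp]; rfl
      _ = suppSub d W := by rw [hsp, Submodule.map_top, range_extZero]


lemma replace_mp {V : Type} [Fintype V] [DecidableEq V]
    {Λ₀ Λ₁ Λ₂ : Type} [Fintype Λ₀] [Fintype Λ₁] [Fintype Λ₂]
    (d : ℕ) (W : Set V) [Fintype ↥W]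
    (H : LoopedGraph ↥W Λ₁) (H' : LoopedGraph ↥W Λ₂)
    (hHmin : LCMinRigid d H) (hH'min : LCMinRigid d H')
    (G : LoopedGraph V (Λ₁ ⊕ Λ₀)) (G' : LoopedGraph V (Λ₂ ⊕ Λ₀))
    (hHsub : ∀ a b : ↥W, H.graph.Adj a b → G.graph.Adj a.1 b.1)
    (hGloop : ∀ j : Λ₁, G.loopAt (Sum.inl j) = (H.loopAt j).1)
    (hG'adj : ∀ a b : V, G'.graph.Adj a b ↔
        ((G.graph.Adj a b ∧
            ¬ ∃ (ha : a ∈ W) (hb : b ∈ W), H.graph.Adj ⟨a, ha⟩ ⟨b, hb⟩) ∨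
          (∃ (ha : a ∈ W) (hb : b ∈ W), H'.graph.Adj ⟨a, ha⟩ ⟨b, hb⟩)))
    (hG'loop₁ : ∀ j : Λ₂, G'.loopAt (Sum.inl j) = (H'.loopAt j).1)
    (hG'loop₀ : ∀ j : Λ₀, G'.loopAt (Sum.inr j) = G.loopAt (Sum.inr j))
    (hnopar : ∀ a b : ↥W, H'.graph.Adj a b → G.graph.Adj a.1 b.1 → H.graph.Adj a b) :
    LCIndependent d G → LCIndependent d G' := by
  intro hGind p q' hgen'
  classical
  have hH'sub : ∀ a b : ↥W, H'.graph.Adj a b → G'.graph.Adj a.1 b.1 := fun a b h =>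
    (hG'adj a.1 b.1).mpr (Or.inr ⟨a.2, b.2, h⟩)
  set q₀ : Λ₀ → Fin d → ℝ := fun j => q' (Sum.inr j) with hq₀
  have hbase : AlgebraicIndependent ℚ (Sum.elim (fun x : V × Fin d => p x.1 x.2)
      (fun y : Λ₀ × Fin d => q₀ y.1 y.2)) := by
    have hinj : Function.Injective (Sum.map (id : V × Fin d → V × Fin d)
        (fun y : Λ₀ × Fin d => ((Sum.inr y.1 : Λ₂ ⊕ Λ₀), y.2))) := by
      apply Function.Injective.sumMap injective_id
      intro a b hab
      simp only [Prod.mk.injEq, Sum.inr.injEq] at hab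
      exact Prod.ext hab.1 hab.2
    have h2 := hgen'.comp _ hinj
    have he : Sum.elim (fun x : V × Fin d => p x.1 x.2)
        (fun y : Λ₀ × Fin d => q₀ y.1 y.2) =
        (Sum.elim (fun x : V × Fin d => p x.1 x.2)
          (fun y : (Λ₂ ⊕ Λ₀) × Fin d => q' y.1 y.2)) ∘
        (Sum.map id (fun y : Λ₀ × Fin d => ((Sum.inr y.1 : Λ₂ ⊕ Λ₀), y.2))) := by
      funext z; rcases z with x | y <;> rfl
    rw [he]; exact h2
  obtain ⟨h, hh⟩ := exists_extend (κ := Λ₁ × Fin d) _ hbase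
  set q₁ : Λ₁ → Fin d → ℝ := fun j i => h (j, i) with hq₁
  have hgen1 : GenericPQ d p (Sum.elim q₁ q₀) := by
    set ψ : ((V × Fin d) ⊕ ((Λ₁ ⊕ Λ₀) × Fin d)) →
        (((V × Fin d) ⊕ (Λ₀ × Fin d)) ⊕ (Λ₁ × Fin d)) :=
      Sum.elim (fun x => Sum.inl (Sum.inl x))
        (fun y => Sum.elim (fun j => Sum.inr (j, y.2))
          (fun j => Sum.inl (Sum.inr (j, y.2))) y.1) with hψ
    have hinj : Function.Injective ψ := by
      have hleft : Function.LeftInverse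
          (Sum.elim (Sum.elim (fun x : V × Fin d => (Sum.inl x : (V × Fin d) ⊕ ((Λ₁ ⊕ Λ₀) × Fin d)))
            (fun y : Λ₀ × Fin d => Sum.inr ((Sum.inr y.1 : Λ₁ ⊕ Λ₀), y.2)))
            (fun y : Λ₁ × Fin d => Sum.inr ((Sum.inl y.1 : Λ₁ ⊕ Λ₀), y.2))) ψ := by
        rintro (x | ⟨j | j, i⟩) <;> rfl
      exact hleft.injective
    have h2 := hh.comp _ hinj
    have he : Sum.elim (fun x : V × Fin d => p x.1 x.2)
        (fun y : (Λ₁ ⊕ Λ₀) × Fin d => Sum.elim q₁ q₀ y.1 y.2) =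
        (Sum.elim (Sum.elim (fun x : V × Fin d => p x.1 x.2)
          (fun y : Λ₀ × Fin d => q₀ y.1 y.2)) h) ∘ ψ := by
      funext z
      rcases z with x | ⟨j | j, i⟩ <;> rfl
    show AlgebraicIndependent ℚ (Sum.elim (fun x : V × Fin d => p x.1 x.2)
      (fun y : (Λ₁ ⊕ Λ₀) × Fin d => Sum.elim q₁ q₀ y.1 y.2))
    rw [he]
    exact h2
  have hGli := hGind p (Sum.elim q₁ q₀) hgen1
  rw [graph_li_iff d W G H hHsub hGloop hHmin p _ hgen1] at hGli
  rw [graph_li_iff d W G' H' hH'sub hG'loop₁ hH'min p q' hgen']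
  have htrans : ∀ s : Sym2 V, (s ∈ G'.graph.edgeSet ∧ ¬ Smell H' s) ↔
      (s ∈ G.graph.edgeSet ∧ ¬ Smell H s) := by
    intro s
    induction s using Sym2.ind with
    | _ a b =>
      rw [SimpleGraph.mem_edgeSet, SimpleGraph.mem_edgeSet, smell_iff, smell_iff]
      have hiff := hG'adj a b
      have hnp : (∃ (ha : a ∈ W) (hb : b ∈ W), H'.graph.Adj ⟨a, ha⟩ ⟨b, hb⟩) →
          G.graph.Adj a b →
          (∃ (ha : a ∈ W) (hb : b ∈ W), H.graph.Adj ⟨a, ha⟩ ⟨b, hb⟩) := by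
        rintro ⟨ha, hb, hadj⟩ hg
        exact ⟨ha, hb, hnopar _ _ hadj hg⟩
      constructor
      · rintro ⟨hg', hns⟩
        rcases hiff.mp hg' with ⟨hg, hn⟩ | hh'
        · exact ⟨hg, hn⟩
        · exact absurd hh' hns
      · rintro ⟨hg, hn⟩
        exact ⟨hiff.mpr (Or.inl ⟨hg, hn⟩), fun hh' => hn (hnp hh' hg)⟩
  set eR : {e : ↥G'.graph.edgeSet // ¬ Smell H' e.1} ≃
      {e : ↥G.graph.edgeSet // ¬ Smell H e.1} :=
    { toFun := fun r => ⟨⟨r.1.1, ((htrans r.1.1).mp ⟨r.1.2, r.2⟩).1⟩,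
        ((htrans r.1.1).mp ⟨r.1.2, r.2⟩).2⟩
      invFun := fun r => ⟨⟨r.1.1, ((htrans r.1.1).mpr ⟨r.1.2, r.2⟩).1⟩,
        ((htrans r.1.1).mpr ⟨r.1.2, r.2⟩).2⟩
      left_inv := fun r => Subtype.ext (Subtype.ext rfl)
      right_inv := fun r => Subtype.ext (Subtype.ext rfl) } with heR
  have hfeq : restRows d W G' H' p (fun j => q' (Sum.inr j)) =
      (restRows d W G H p (fun j => Sum.elim q₁ q₀ (Sum.inr j))) ∘
        (eR.sumCongr (Equiv.refl Λ₀)) := by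
    funext z
    rcases z with r | j
    · rfl
    · funext x
      show (if x.1 = G'.loopAt (Sum.inr j) then q₀ j x.2 else 0) =
        (if x.1 = G.loopAt (Sum.inr j) then q₀ j x.2 else 0)
      rw [hG'loop₀ j]
  rw [hfeq]
  obtain ⟨hli, hdis⟩ := hGli
  constructor
  · exact (linearIndependent_equiv (eR.sumCongr (Equiv.refl Λ₀))).mpr hli
  · rw [(eR.sumCongr (Equiv.refl Λ₀)).surjective.range_comp]
    exact hdis

end MinRigidAux

/-- Replacing a minimally rigid subgraph `H` of `G` on a vertex set
`W` by another minimally rigid looped simple graph `H'` on the same vertex set (without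
creating parallel edges or repeated loops) does not change independence in `ℝ^d`. -/
theorem minRigid_replacement_independent {V : Type} [Fintype V] [DecidableEq V]
    {Λ₀ Λ₁ Λ₂ : Type} [Fintype Λ₀] [Fintype Λ₁] [Fintype Λ₂]
    (d : ℕ) (hd : 1 ≤ d) (W : Set V) [Fintype ↥W]
    (H : LoopedGraph ↥W Λ₁) (H' : LoopedGraph ↥W Λ₂)
    (hHmin : LCMinRigid d H) (hH'min : LCMinRigid d H')
    (G : LoopedGraph V (Λ₁ ⊕ Λ₀)) (G' : LoopedGraph V (Λ₂ ⊕ Λ₀))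
    (hHsub : ∀ a b : ↥W, H.graph.Adj a b → G.graph.Adj a.1 b.1)
    (hGloop : ∀ j : Λ₁, G.loopAt (Sum.inl j) = (H.loopAt j).1)
    (hG'adj : ∀ a b : V, G'.graph.Adj a b ↔
        ((G.graph.Adj a b ∧
            ¬ ∃ (ha : a ∈ W) (hb : b ∈ W), H.graph.Adj ⟨a, ha⟩ ⟨b, hb⟩) ∨
          (∃ (ha : a ∈ W) (hb : b ∈ W), H'.graph.Adj ⟨a, ha⟩ ⟨b, hb⟩)))
    (hG'loop₁ : ∀ j : Λ₂, G'.loopAt (Sum.inl j) = (H'.loopAt j).1)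
    (hG'loop₀ : ∀ j : Λ₀, G'.loopAt (Sum.inr j) = G.loopAt (Sum.inr j))
    (hnopar : ∀ a b : ↥W, H'.graph.Adj a b → G.graph.Adj a.1 b.1 → H.graph.Adj a b) :
    LCIndependent d G ↔ LCIndependent d G' := by
  have hH'sub : ∀ a b : ↥W, H'.graph.Adj a b → G'.graph.Adj a.1 b.1 := fun a b h =>
    (hG'adj a.1 b.1).mpr (Or.inr ⟨a.2, b.2, h⟩)
  have hGadj : ∀ a b : V, G.graph.Adj a b ↔
      ((G'.graph.Adj a b ∧
          ¬ ∃ (ha : a ∈ W) (hb : b ∈ W), H'.graph.Adj ⟨a, ha⟩ ⟨b, hb⟩) ∨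
        (∃ (ha : a ∈ W) (hb : b ∈ W), H.graph.Adj ⟨a, ha⟩ ⟨b, hb⟩)) := by
    intro a b
    constructor
    · intro hG
      by_cases hH : ∃ (ha : a ∈ W) (hb : b ∈ W), H.graph.Adj ⟨a, ha⟩ ⟨b, hb⟩
      · exact Or.inr hH
      · refine Or.inl ⟨(hG'adj a b).mpr (Or.inl ⟨hG, hH⟩), ?_⟩
        rintro ⟨ha, hb, hadj⟩
        exact hH ⟨ha, hb, hnopar _ _ hadj hG⟩
    · rintro (⟨hG', hnH'⟩ | ⟨ha, hb, hadj⟩)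
      · rcases (hG'adj a b).mp hG' with ⟨hG, _⟩ | hH'
        · exact hG
        · exact absurd hH' hnH'
      · exact hHsub _ _ hadj
  have hnopar' : ∀ a b : ↥W, H.graph.Adj a b → G'.graph.Adj a.1 b.1 →
      H'.graph.Adj a b := by
    intro a b hadj hG'
    rcases (hG'adj a.1 b.1).mp hG' with ⟨_, hnH⟩ | ⟨ha, hb, hadj'⟩
    · exact absurd ⟨a.2, b.2, hadj⟩ hnH
    · exact hadj'
  constructor
  · exact MinRigidAux.replace_mp d W H H' hHmin hH'min G G' hHsub hGloop hG'adj
      hG'loop₁ hG'loop₀ hnopar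
  · exact MinRigidAux.replace_mp d W H' H hH'min hHmin G' G hH'sub hG'loop₁ hGadj
      hGloop (fun j => (hG'loop₀ j).symm) hnopar'
end

section
/- Let d ≥ 1 and let G = (V,E,L) be a looped simple graph which is an ℛ_d-circuit. If a vertex v of G is incident with d loops of G, then ṗ(v) = 0 for every infinitesimal motion ṗ of every generic realisation (G,p,q) in ℝ^d; more generally, for any loop ℓ of an ℛ_d-circuit G and any generic (p,q), the kernels of R(G,p,q) and R(G − ℓ, p, q) coincide. -/
/-- A looped simple graph is an `ℛ_d`-circuit if, for every generic `(p,q)`, the rows of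
its rigidity matrix are linearly dependent but the rows corresponding to any proper
subgraph (i.e. any proper subset of the edges and loops) are linearly independent. -/
def RCircuit {V Λ : Type*} [DecidableEq V] (d : ℕ) (G : LoopedGraph V Λ) : Prop :=
  ∀ (p : V → Fin d → ℝ) (q : Λ → Fin d → ℝ), GenericPQ d p q →
    (¬ LinearIndependent ℝ (fun r => lcRigidityMatrix d G p q r)) ∧
    (∀ S : Set (↥G.graph.edgeSet ⊕ Λ), S ≠ Set.univ →
      LinearIndependent ℝ (fun r : ↥S => lcRigidityMatrix d G p q r.1))


lemma det_ne_zero_of_algIndep' {n : Type} [Fintype n] [DecidableEq n] (M : Matrix n n ℝ)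
    (h : AlgebraicIndependent ℚ (fun ik : n × n => M ik.1 ik.2)) : M.det ≠ 0 := by
  rw [← Matrix.mvPolynomialX_mapMatrix_aeval ℚ M, ← AlgHom.map_det]
  intro h0
  have : Matrix.det (Matrix.mvPolynomialX n n ℚ) = 0 := by
    have := h (a₁ := Matrix.det (Matrix.mvPolynomialX n n ℚ)) (a₂ := 0) (by simpa using h0)
    simpa using this
  exact Matrix.det_mvPolynomialX_ne_zero n ℚ this

/-- If `G` is an `ℛ_d`-circuit then: any vertex incident with `d`
loops of `G` is fixed by every infinitesimal motion of every generic realisation; more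
generally, for any loop `ℓ` and any generic `(p,q)` the kernels of `R(G,p,q)` and
`R(G-ℓ,p,q)` coincide. -/
theorem rcircuit_loop_kernel {V Λ : Type} [Fintype V] [DecidableEq V] [Fintype Λ]
    (d : ℕ) (hd : 1 ≤ d) (G : LoopedGraph V Λ) (hG : RCircuit d G) :
    (∀ v : V, d ≤ {j : Λ | G.loopAt j = v}.ncard →
      ∀ (p : V → Fin d → ℝ) (q : Λ → Fin d → ℝ), GenericPQ d p q →
        ∀ pdot : V → Fin d → ℝ,
          (lcRigidityMatrix d G p q).mulVec (fun x => pdot x.1 x.2) = 0 → pdot v = 0) ∧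
    (∀ ℓ : Λ, ∀ (p : V → Fin d → ℝ) (q : Λ → Fin d → ℝ), GenericPQ d p q →
      {x : V × Fin d → ℝ | (lcRigidityMatrix d G p q).mulVec x = 0} =
      {x : V × Fin d → ℝ | ((lcRigidityMatrix d G p q).submatrix
          (Sum.map id (Subtype.val : {j : Λ // j ≠ ℓ} → Λ)) id).mulVec x = 0}) := by
  constructor
  · intro v hv p q hpq pdot hker
    obtain ⟨t, hts, htc⟩ := Set.exists_subset_card_eq hv
    have htfin : t.Finite := Set.toFinite t
    have hcard : htfin.toFinset.card = d := by
      rw [← Set.ncard_eq_toFinset_card t htfin]; exact htc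
    set e := htfin.toFinset.equivFinOfCardEq hcard with he
    set f : Fin d → Λ := fun i => (e.symm i : Λ) with hf
    have hfinj : Function.Injective f := by
      intro a b hab
      have : e.symm a = e.symm b := Subtype.ext hab
      simpa using congrArg e this
    have hfv : ∀ i, G.loopAt (f i) = v := fun i =>
      hts (htfin.mem_toFinset.mp (e.symm i).2)
    set M : Matrix (Fin d) (Fin d) ℝ := Matrix.of fun i k => q (f i) k with hM
    have hdet : M.det ≠ 0 := by
      apply det_ne_zero_of_algIndep'
      exact hpq.comp (fun ik : Fin d × Fin d => Sum.inr (f ik.1, ik.2))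
        (by intro a b hab; simp only [Sum.inr.injEq, Prod.mk.injEq] at hab
            exact Prod.ext (hfinj hab.1) hab.2)
    have hMv : M.mulVec (pdot v) = 0 := by
      funext i
      have h1 := congrFun hker (Sum.inr (f i))
      simp only [Matrix.mulVec, dotProduct, lcRigidityMatrix, Matrix.of_apply,
        Pi.zero_apply, hfv i] at h1 ⊢
      have key : ∑ x : V × Fin d, (if x.1 = v then q (f i) x.2 else 0) * pdot x.1 x.2
          = ∑ k, q (f i) k * pdot v k := by
        rw [Fintype.sum_prod_type, Finset.sum_comm]
        simp [ite_mul, Finset.sum_ite_eq']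
      show ∑ k, q (f i) k * pdot v k = 0
      rw [← key]; exact h1
    exact Matrix.eq_zero_of_mulVec_eq_zero hdet hMv
  · intro ℓ p q hpq
    set M := lcRigidityMatrix d G p q with hMdef
    ext x
    simp only [Set.mem_setOf_eq]
    constructor
    · intro hx
      funext r
      exact congrFun hx (Sum.map id Subtype.val r)
    · intro hx
      have hrows : ∀ r, r ≠ Sum.inr ℓ → (M.mulVec x) r = 0 := by
        intro r hr
        match r with
        | Sum.inl e => exact congrFun hx (Sum.inl e)
        | Sum.inr j => exact congrFun hx (Sum.inr ⟨j, fun h => hr (by rw [h])⟩)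
      obtain ⟨hdep, hindep⟩ := hG p q hpq
      rw [linearIndependent_iff] at hdep
      push_neg at hdep
      obtain ⟨l, hl0, hlne⟩ := hdep
      have hall : ∀ r, l r ≠ 0 := by
        intro r0 hr0
        have hS : (l.support : Set (↥G.graph.edgeSet ⊕ Λ)) ≠ Set.univ := by
          intro h
          have : r0 ∈ (l.support : Set (↥G.graph.edgeSet ⊕ Λ)) := h ▸ Set.mem_univ r0
          exact (Finsupp.mem_support_iff.mp this) hr0
        have hLI := hindep _ hS
        exact hlne ((linearIndepOn_iff (v := fun r => lcRigidityMatrix d G p q r)).mp hLI l (fun a ha => ha) hl0)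
      let φ : (V × Fin d → ℝ) →ₗ[ℝ] ℝ :=
        { toFun := fun y => ∑ j, y j * x j
          map_add' := by intro a b; simp [add_mul, Finset.sum_add_distrib]
          map_smul' := by intro c a; simp [Finset.mul_sum, mul_assoc] }
      have hφ0 : φ (Finsupp.linearCombination ℝ (fun r => M r) l) = 0 := by
        rw [hl0]; simp
      rw [Finsupp.apply_linearCombination, Finsupp.linearCombination_apply, Finsupp.sum] at hφ0
      simp only [Function.comp_apply] at hφ0
      have hone : ∑ r ∈ l.support, l r • φ (M r) = l (Sum.inr ℓ) • φ (M (Sum.inr ℓ)) := by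
        apply Finset.sum_eq_single_of_mem
        · exact Finsupp.mem_support_iff.mpr (hall _)
        · intro r _ hrne
          have : φ (M r) = 0 := hrows r hrne
          rw [this, smul_zero]
      rw [hone] at hφ0
      have hlast : φ (M (Sum.inr ℓ)) = 0 := by
        rcases smul_eq_zero.mp hφ0 with h | h
        · exact absurd h (hall _)
        · exact h
      funext r
      by_cases hr : r = Sum.inr ℓ
      · subst hr; exact hlast
      · exact hrows r hr
end
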